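/- There exist universal constants 0 < c₁ ≤ c₂ such that for every block-model parameter pair (p,Q) on 2 communities with p₁ ≤ p₂: c₁ · M ≤ Φ_{p,Q}(Cyc_4) ≤ c₂ · M, where M = max(p₁⁴·Q₁₁⁴, p₁²·Q₁₂⁴, Q₂₂⁴). -/

import Mathlib

set_option linter.unusedVariables false

open Finset

open Finset

/-- The Fourier coefficient Φ_{p,Q}(H) of a finite simple graph `H`. -/
noncomputable def Phi {k : ℕ} (p : Fin k → ℝ) (Q : Fin k → Fin k → ℝ)
    (hQ : ∀ i j, Q i j = Q j i) {V : Type} [Fintype V] [DecidableEq V]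
    (H : SimpleGraph V) [DecidableRel H.Adj] : ℝ :=
  ∑ x : V → Fin k, (∏ v, p (x v)) *
    ∏ e ∈ H.edgeFinset,
      Sym2.lift ⟨fun u v => Q (x u) (x v), fun u v => hQ (x u) (x v)⟩ e

/-- The partition value Ψ_{p,Q}(H) = |Φ_{p,Q}(H)|^{1/|V(H)|}. -/
noncomputable def Psi {k : ℕ} (p : Fin k → ℝ) (Q : Fin k → Fin k → ℝ)
    (hQ : ∀ i j, Q i j = Q j i) {V : Type} [Fintype V] [DecidableEq V]
    (H : SimpleGraph V) [DecidableRel H.Adj] : ℝ :=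
  |Phi p Q hQ H| ^ ((Fintype.card V : ℝ)⁻¹)

/-- The star graph with one center (vertex 0) joined to `t` leaves. -/
def StarGraph (t : ℕ) : SimpleGraph (Fin (t + 1)) where
  Adj u v := u ≠ v ∧ (u = 0 ∨ v = 0)
  symm := ⟨fun u v h => ⟨h.1.symm, h.2.symm⟩⟩
  loopless := ⟨fun u h => h.1 rfl⟩

instance (t : ℕ) : DecidableRel (StarGraph t).Adj :=
  fun u v => inferInstanceAs (Decidable (u ≠ v ∧ (u = 0 ∨ v = 0)))

/-- The cycle graph on 4 vertices. -/
def Cyc4 : SimpleGraph (Fin 4) where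
  Adj u v := u ≠ v ∧ ((u.val + 1) % 4 = v.val ∨ (v.val + 1) % 4 = u.val)
  symm := ⟨fun u v h => ⟨h.1.symm, h.2.symm⟩⟩
  loopless := ⟨fun u h => h.1 rfl⟩

instance : DecidableRel Cyc4.Adj :=
  fun u v => inferInstanceAs
    (Decidable (u ≠ v ∧ ((u.val + 1) % 4 = v.val ∨ (v.val + 1) % 4 = u.val)))



lemma prod4_aux (g : Sym2 (Fin 4) → ℝ) :
    ∏ e ∈ ({s(0,1), s(1,2), s(2,3), s(0,3)} : Finset (Sym2 (Fin 4))), g e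
      = g s(0,1) * (g s(1,2) * (g s(2,3) * g s(0,3))) := by
  rw [Finset.prod_insert (by decide), Finset.prod_insert (by decide),
    Finset.prod_insert (by decide), Finset.prod_singleton]

set_option maxHeartbeats 1000000 in
lemma phi_cyc4_aux (p : Fin 2 → ℝ) (Q : Fin 2 → Fin 2 → ℝ) (hQ : ∀ i j, Q i j = Q j i) :
    Phi p Q hQ Cyc4 =
      (p 0 ^ 2 * Q 0 0 ^ 2 + p 0 * p 1 * Q 0 1 ^ 2) ^ 2
      + 2 * (p 0 * p 1 * Q 0 1 ^ 2) * (p 0 * Q 0 0 + p 1 * Q 1 1) ^ 2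
      + (p 0 * p 1 * Q 0 1 ^ 2 + p 1 ^ 2 * Q 1 1 ^ 2) ^ 2 := by
  have hE : Cyc4.edgeFinset = {s(0,1), s(1,2), s(2,3), s(0,3)} := by decide
  rw [Phi, hE,
    ← Fintype.sum_bijective (fun t : Fin 2 × Fin 2 × Fin 2 × Fin 2 => ![t.1, t.2.1, t.2.2.1, t.2.2.2]) (by decide) _ _ (fun t => rfl)]
  simp only [Fintype.sum_prod_type, Fin.sum_univ_two, Fin.prod_univ_four, prod4_aux, Sym2.lift_mk,
    Matrix.cons_val_zero, Matrix.cons_val_one, Matrix.head_cons, Matrix.cons_val_two,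
    Matrix.cons_val_three, Matrix.tail_cons]
  rw [hQ 1 0]
  ring

set_option maxHeartbeats 1000000 in
lemma ineq_aux (s t q r u : ℝ) (hs : 0 ≤ s) (hst : s + t = 1) (hle : s ≤ t) :
    (1/16 : ℝ) * max (s^4*q^4) (max (s^2*r^4) (u^4)) ≤
      (s^2*q^2 + s*t*r^2)^2 + 2*(s*t*r^2)*(s*q + t*u)^2 + (s*t*r^2 + t^2*u^2)^2 ∧
    (s^2*q^2 + s*t*r^2)^2 + 2*(s*t*r^2)*(s*q + t*u)^2 + (s*t*r^2 + t^2*u^2)^2 ≤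
      (16 : ℝ) * max (s^4*q^4) (max (s^2*r^4) (u^4)) := by
  have ht2 : 1/2 ≤ t := by linarith
  have ht1 : t ≤ 1 := by nlinarith
  have ht0 : 0 ≤ t := by linarith
  set Φ : ℝ := (s^2*q^2 + s*t*r^2)^2 + 2*(s*t*r^2)*(s*q + t*u)^2 + (s*t*r^2 + t^2*u^2)^2 with hΦ
  have hb : (0:ℝ) ≤ s*t*r^2 := by positivity
  have hbc : (0:ℝ) ≤ 2*(s*t*r^2)*(s*q + t*u)^2 := by positivity
  have h1 : s^4*q^4 ≤ 16 * Φ := by nlinarith [sq_nonneg (s*t*r^2), sq_nonneg (s*t*r^2 + t^2*u^2), mul_nonneg (mul_nonneg (sq_nonneg s) (sq_nonneg q)) hb]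
  have h2 : s^2*r^4 ≤ 16 * Φ := by nlinarith [sq_nonneg (s*t*r^2 + t^2*u^2), mul_nonneg (mul_nonneg (sq_nonneg s) (sq_nonneg q)) hb, mul_nonneg (mul_nonneg (mul_nonneg hs hs) (mul_nonneg (sq_nonneg r) (sq_nonneg r))) (mul_nonneg (by linarith : (0:ℝ) ≤ t - 1/2) (by linarith : (0:ℝ) ≤ t + 1/2))]
  have h3 : u^4 ≤ 16 * Φ := by nlinarith [sq_nonneg (s^2*q^2 + s*t*r^2), mul_nonneg hb (mul_nonneg (sq_nonneg t) (sq_nonneg u)), mul_nonneg (mul_nonneg (sq_nonneg u) (sq_nonneg u)) (mul_nonneg (mul_nonneg (by linarith : (0:ℝ) ≤ t - 1/2) (by linarith : (0:ℝ) ≤ t + 1/2)) (by nlinarith : (0:ℝ) ≤ t^2 + 1/4))]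
  set M : ℝ := max (s^4*q^4) (max (s^2*r^4) (u^4)) with hM
  have hMle : M ≤ 16 * Φ := max_le h1 (max_le h2 h3)
  clear h1 h2 h3 hbc
  constructor
  · linarith
  · have hM1 : s^4*q^4 ≤ M := le_max_left _ _
    have hM2 : s^2*r^4 ≤ M := le_trans (le_max_left _ _) (le_max_right _ _)
    have hM3 : u^4 ≤ M := le_trans (le_max_right _ _) (le_max_right _ _)
    have hsr : (0:ℝ) ≤ s^2*r^4 := by positivity
    have hb2 : s^2*t^2*r^4 ≤ M := by nlinarith [mul_nonneg hsr (mul_nonneg (by linarith : (0:ℝ) ≤ 1-t) (by linarith : (0:ℝ) ≤ 1+t))]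
    have hu4 : (0:ℝ) ≤ u^4 := by positivity
    have hc2 : t^4*u^4 ≤ M := by nlinarith [mul_nonneg (mul_nonneg hu4 (mul_nonneg (by linarith : (0:ℝ) ≤ 1-t) (by linarith : (0:ℝ) ≤ 1+t))) (by positivity : (0:ℝ) ≤ 1+t^2)]
    have hcross : (s*q + t*u)^2 ≤ 2*(s^2*q^2) + 2*(t^2*u^2) := by nlinarith [sq_nonneg (s*q - t*u)]
    have hbc2 : 2*(s*t*r^2)*(s*q + t*u)^2 ≤ 2*(s*t*r^2)*(2*(s^2*q^2) + 2*(t^2*u^2)) := by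
      have := mul_le_mul_of_nonneg_left hcross (by linarith : (0:ℝ) ≤ 2*(s*t*r^2))
      linarith
    have key : Φ ≤ 4*(s^4*q^4) + 8*(s^2*t^2*r^4) + 4*(t^4*u^4) := by
      nlinarith [sq_nonneg (s^2*q^2 - s*t*r^2), sq_nonneg (s*t*r^2 - t^2*u^2)]
    linarith only [key, hM1, hb2, hc2]

/-- two-sided bound on the signed 4-cycle coefficient in 2-SBMs. -/
theorem stmt10 :
    ∃ c₁ c₂ : ℝ, 0 < c₁ ∧ c₁ ≤ c₂ ∧
      ∀ (p : Fin 2 → ℝ) (Q : Fin 2 → Fin 2 → ℝ),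
        (∀ i, 0 ≤ p i) → (∑ i, p i = 1) →
        ∀ (hQ : ∀ i j, Q i j = Q j i),
        (∀ i j, |Q i j| ≤ 1) → p 0 ≤ p 1 →
        c₁ * max ((p 0) ^ 4 * (Q 0 0) ^ 4)
            (max ((p 0) ^ 2 * (Q 0 1) ^ 4) ((Q 1 1) ^ 4)) ≤ Phi p Q hQ Cyc4 ∧
        Phi p Q hQ Cyc4 ≤
          c₂ * max ((p 0) ^ 4 * (Q 0 0) ^ 4)
            (max ((p 0) ^ 2 * (Q 0 1) ^ 4) ((Q 1 1) ^ 4)) := by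
  refine ⟨1/16, 16, by norm_num, by norm_num, fun p Q hp hsum hQ hQle hle => ?_⟩
  have hst : p 0 + p 1 = 1 := by simpa [Fin.sum_univ_two] using hsum
  have h := ineq_aux (p 0) (p 1) (Q 0 0) (Q 0 1) (Q 1 1) (hp 0) hst hle
  rw [phi_cyc4_aux p Q hQ]
  exact h
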